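/- arXiv:2405.08902 — 4 statements merged into one kernel-verified Lean document; each statement's English description precedes it below -/
import Mathlib

section
/- The radial profile t ↦ |g°(te^{iτ})| = ((r^j R - r^{2j})/(1 - r^{2j})) t^{-j} + ((1 - r^j R)/(1 - r^{2j})) t^j is nondecreasing on [1, r] if and only if the Nitsche-type bound R ≥ (1/2) r^{-j}(1 + r^{2j}) holds. -/
/- The radial profile G(t) = ((r^jR - r^{2j})/(1-r^{2j})) t^{-j}
+ ((1 - r^jR)/(1-r^{2j})) t^j is nondecreasing on [1,r] iff the Nitsche-type
bound R ≥ (1/2) r^{-j} (1 + r^{2j}) holds. -/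
theorem stmt4 (j : ℕ) (hj : 0 < j) (r R : ℝ) (hr : 1 < r) (hR : 1 < R) :
    MonotoneOn (fun t : ℝ =>
        (r ^ j * R - r ^ (2 * j)) / (1 - r ^ (2 * j)) * t ^ (-(j : ℤ))
          + (1 - r ^ j * R) / (1 - r ^ (2 * j)) * t ^ (j : ℤ)) (Set.Icc 1 r)
      ↔ R ≥ (1 / 2) * r ^ (-(j : ℤ)) * (1 + r ^ (2 * j)) := by
  have h2j : r ^ (2 * j) = r ^ j * r ^ j := by rw [two_mul, pow_add]
  have hu : (1:ℝ) < r ^ j := one_lt_pow₀ hr hj.ne'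
  have hu0 : (0:ℝ) < r ^ j := by positivity
  have hD : 1 - r ^ (2 * j) < 0 := by nlinarith
  set a := (r ^ j * R - r ^ (2 * j)) / (1 - r ^ (2 * j)) with ha
  set b := (1 - r ^ j * R) / (1 - r ^ (2 * j)) with hb
  have hbpos : 0 < b := by
    apply div_pos_of_neg_of_neg
    · nlinarith
    · exact hD
  have hrneg : r ^ (-(j:ℤ)) = (r ^ j)⁻¹ := by
    rw [zpow_neg, zpow_natCast]
  have hinv : (r ^ j)⁻¹ * r ^ j = 1 := inv_mul_cancel₀ hu0.ne'
  have hab : b - a = (1 + r ^ (2 * j) - 2 * (r ^ j * R)) / (1 - r ^ (2 * j)) := by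
    rw [ha, hb, div_sub_div_same]
    ring_nf
  have hRHS : (R ≥ (1 / 2) * r ^ (-(j:ℤ)) * (1 + r ^ (2 * j))) ↔ a ≤ b := by
    rw [hrneg]
    constructor
    · intro h
      have hnum : 1 + r ^ (2 * j) - 2 * (r ^ j * R) ≤ 0 := by nlinarith
      have : 0 ≤ b - a := by
        rw [hab]
        exact div_nonneg_iff.mpr (Or.inr ⟨hnum, hD.le⟩)
      linarith
    · intro h
      have h0 : 0 ≤ b - a := by linarith
      rw [hab] at h0
      have hnum : 1 + r ^ (2 * j) - 2 * (r ^ j * R) ≤ 0 := by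
        by_contra hpos
        push_neg at hpos
        have := div_neg_of_pos_of_neg hpos hD
        linarith
      nlinarith [mul_pos hu0 hu0]
  rw [hRHS]
  have hkey : ∀ s t : ℝ, 0 < s → 0 < t →
      (a * t ^ (-(j:ℤ)) + b * t ^ (j:ℤ)) - (a * s ^ (-(j:ℤ)) + b * s ^ (j:ℤ))
        = (t ^ j - s ^ j) * (b - a / (s ^ j * t ^ j)) := by
    intro s t hs ht
    have hs0 : s ^ j ≠ 0 := by positivity
    have ht0 : t ^ j ≠ 0 := by positivity
    simp only [zpow_neg, zpow_natCast]
    field_simp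
    ring
  constructor
  · intro hmono
    by_contra hlt
    push_neg at hlt
    have hapos : 0 < a := lt_trans hbpos hlt
    have habd : 1 < a / b := (one_lt_div hbpos).mpr hlt
    set c := (a / b) ^ ((j:ℝ))⁻¹ with hc
    have hc1 : 1 < c := by
      rw [hc]
      exact Real.one_lt_rpow_iff_of_pos (by positivity) |>.mpr
        (Or.inl ⟨habd, by positivity⟩)
    have hcj : c ^ j = a / b := by
      rw [hc, ← Real.rpow_natCast ((a / b) ^ ((j:ℝ))⁻¹) j, ← Real.rpow_mul (by positivity),
        inv_mul_cancel₀ (by exact_mod_cast hj.ne' : (j:ℝ) ≠ 0), Real.rpow_one]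
    set t := min r ((1 + c) / 2) with htdef
    have ht1 : 1 < t := lt_min hr (by linarith)
    have htr : t ≤ r := min_le_left _ _
    have htc : t < c := lt_of_le_of_lt (min_le_right _ _) (by linarith)
    have htj : t ^ j < a / b := by
      rw [← hcj]
      exact pow_lt_pow_left₀ htc (by linarith) hj.ne'
    have htj1 : 1 < t ^ j := one_lt_pow₀ ht1 hj.ne'
    have hbt : b * t ^ j < a := by
      have := (lt_div_iff₀ hbpos).mp htj
      linarith
    have hneg : b - a / (1 ^ j * t ^ j) < 0 := by
      rw [one_pow, one_mul, sub_neg]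
      rw [lt_div_iff₀ (by positivity)]
      linarith
    have hGle := hmono (Set.mem_Icc.mpr ⟨le_refl 1, hr.le⟩)
      (Set.mem_Icc.mpr ⟨ht1.le, htr⟩) ht1.le
    simp only at hGle
    have hid := hkey 1 t one_pos (by linarith)
    have hprod : (t ^ j - 1 ^ j) * (b - a / (1 ^ j * t ^ j)) < 0 :=
      mul_neg_of_pos_of_neg (by rw [one_pow]; linarith) hneg
    linarith
  · intro hab2
    intro s hs t ht hst
    simp only [Set.mem_Icc] at hs ht
    have hs0 : (0:ℝ) < s := lt_of_lt_of_le one_pos hs.1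
    have ht0 : (0:ℝ) < t := lt_of_lt_of_le one_pos ht.1
    have hsj : (1:ℝ) ≤ s ^ j := one_le_pow₀ hs.1
    have htj : (1:ℝ) ≤ t ^ j := one_le_pow₀ ht.1
    have hpow : s ^ j ≤ t ^ j := pow_le_pow_left₀ hs0.le hst j
    have hfac : 0 ≤ b - a / (s ^ j * t ^ j) := by
      rcases le_or_gt a 0 with hA | hA
      · have : a / (s ^ j * t ^ j) ≤ 0 := div_nonpos_of_nonpos_of_nonneg hA (by positivity)
        linarith
      · have h1 : (1:ℝ) ≤ s ^ j * t ^ j := by nlinarith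
        have : a / (s ^ j * t ^ j) ≤ a := div_le_self hA.le h1
        linarith
    have hid := hkey s t hs0 ht0
    have : 0 ≤ (t ^ j - s ^ j) * (b - a / (s ^ j * t ^ j)) :=
      mul_nonneg (by linarith) hfac
    simp only
    linarith
end

section
/- For the radial harmonic map g°(z) with profile G, the constant c₁ := t²G'(t)² − j²G(t)² is independent of t and equals 4j²(1 + R² − R(r^j + r^{-j}))/(r^j − r^{-j})², where G(t) = ((r^j R − r^{2j})/(1 − r^{2j})) t^{-j} + ((1 − r^j R)/(1 − r^{2j})) t^j. -/
/- For the radial profile G of the j-degree radial harmonic map of A(1,r) onto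
A(1,R), the quantity t²G'(t)² - j²G(t)² is independent of t and equals
c₁ = 4j²(1 + R² - R(r^j + r^{-j}))/(r^j - r^{-j})². -/
set_option maxHeartbeats 1000000 in
theorem stmt8 (j : ℕ) (hj : 0 < j) (r R : ℝ) (hr : 1 < r) (hR : 1 < R) :
    ∀ t ∈ Set.Ioi (0 : ℝ),
      t ^ 2 * (deriv (fun t' : ℝ =>
          (r ^ j * R - r ^ (2 * j)) / (1 - r ^ (2 * j)) * t' ^ (-(j : ℤ))
            + (1 - r ^ j * R) / (1 - r ^ (2 * j)) * t' ^ (j : ℤ)) t) ^ 2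
        - (j ^ 2 : ℝ) *
          ((r ^ j * R - r ^ (2 * j)) / (1 - r ^ (2 * j)) * t ^ (-(j : ℤ))
            + (1 - r ^ j * R) / (1 - r ^ (2 * j)) * t ^ (j : ℤ)) ^ 2
      = 4 * (j ^ 2 : ℝ) * (1 + R ^ 2 - R * (r ^ j + r ^ (-(j : ℤ))))
          / (r ^ j - r ^ (-(j : ℤ))) ^ 2 := by
  intro t ht
  have ht0 : (0:ℝ) < t := ht
  have htne : t ≠ 0 := ne_of_gt ht0
  have hr0 : (0:ℝ) < r := lt_trans one_pos hr
  have hrne : r ≠ 0 := ne_of_gt hr0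
  have hd := ((hasDerivAt_zpow (-(j:ℤ)) t (Or.inl htne)).const_mul
      ((r ^ j * R - r ^ (2 * j)) / (1 - r ^ (2 * j)))).add
    ((hasDerivAt_zpow (j:ℤ) t (Or.inl htne)).const_mul
      ((1 - r ^ j * R) / (1 - r ^ (2 * j))))
  rw [(show HasDerivAt (fun t' : ℝ =>
          (r ^ j * R - r ^ (2 * j)) / (1 - r ^ (2 * j)) * t' ^ (-(j : ℤ))
            + (1 - r ^ j * R) / (1 - r ^ (2 * j)) * t' ^ (j : ℤ)) _ t from hd).deriv]
  have hzm1 : t ^ ((-(j:ℤ)) - 1) = (t ^ j)⁻¹ / t := by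
    rw [zpow_sub₀ htne, zpow_neg, zpow_natCast, zpow_one]
  have hzp1 : t ^ ((j:ℤ) - 1) = t ^ j / t := by
    rw [zpow_sub₀ htne, zpow_natCast, zpow_one]
  have hzt : t ^ (-(j:ℤ)) = (t ^ j)⁻¹ := by rw [zpow_neg, zpow_natCast]
  have hzr : r ^ (-(j:ℤ)) = (r ^ j)⁻¹ := by rw [zpow_neg, zpow_natCast]
  have hztj : t ^ (j:ℤ) = t ^ j := zpow_natCast t j
  have h2jeq : r ^ (2 * j) = r ^ j * r ^ j := by rw [two_mul, pow_add]
  rw [hzm1, hzp1, hzt, hzr, hztj, h2jeq]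
  push_cast
  have htj : t ^ j ≠ 0 := pow_ne_zero _ htne
  have hrjpos : (1:ℝ) < r ^ j := one_lt_pow₀ hr (by omega)
  have hrjne : r ^ j ≠ 0 := pow_ne_zero _ hrne
  have hvv : (1:ℝ) - r ^ j * r ^ j ≠ 0 := by nlinarith
  have hdiff : r ^ j - (r ^ j)⁻¹ ≠ 0 := by
    have h1 : (r ^ j)⁻¹ < 1 := inv_lt_one_of_one_lt₀ hrjpos
    intro h; nlinarith
  generalize hu : t ^ j = u at htj ⊢
  generalize hv : r ^ j = v at hrjne hvv hdiff ⊢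
  rw [eq_div_iff (pow_ne_zero 2 hdiff)]
  have hvv' : (1:ℝ) - v ^ 2 ≠ 0 := by rw [sq]; exact hvv
  field_simp
  ring
end

section
/- The Dirichlet energy of the j-degree radial harmonic map g° on A(1,r), given by E[g°] = ∫_{A(1,r)} |Dg°|² dx dy, equals 4πj² ∫₁^r G(t)²/t dt + 2πc₁ log r, where G is the radial profile and c₁ = t²G'(t)² − j²G(t)². -/
open intervalIntegral in
/- The Dirichlet energy of the j-degree radial harmonic map g°, computed in
polar coordinates as 2π ∫₁^r t |Dg°|² dt with |Dg°|² = j²G²/t² + G'², equals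
4πj² ∫₁^r G(t)²/t dt + 2π c₁ log r, where c₁ = t²G'(t)² - j²G(t)². -/
theorem stmt10 (j : ℕ) (hj : 0 < j) (r R c₁ : ℝ) (hr : 1 < r) (hR : 1 < R)
    (G : ℝ → ℝ)
    (hG : G = fun t : ℝ =>
      (r ^ j * R - r ^ (2 * j)) / (1 - r ^ (2 * j)) * t ^ (-(j : ℤ))
        + (1 - r ^ j * R) / (1 - r ^ (2 * j)) * t ^ (j : ℤ))
    (hc : ∀ t ∈ Set.Icc (1 : ℝ) r,
      t ^ 2 * (deriv G t) ^ 2 - (j ^ 2 : ℝ) * G t ^ 2 = c₁) :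
    (∫ t in (1 : ℝ)..r,
        2 * Real.pi * t * ((j ^ 2 : ℝ) * G t ^ 2 / t ^ 2 + (deriv G t) ^ 2))
      = 4 * Real.pi * (j ^ 2 : ℝ) * (∫ t in (1 : ℝ)..r, G t ^ 2 / t)
        + 2 * Real.pi * c₁ * Real.log r := by
  have huIcc : Set.uIcc (1:ℝ) r = Set.Icc 1 r := Set.uIcc_of_le hr.le
  have hGc : ContinuousOn G (Set.Icc 1 r) := by
    rw [hG]
    apply ContinuousOn.add <;> apply ContinuousOn.mul continuousOn_const <;>
      intro t ht <;>
      exact (continuousAt_zpow₀ t _ (Or.inl (by nlinarith [ht.1]))).continuousWithinAt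
  have h1 : IntervalIntegrable (fun t => 4 * Real.pi * (j^2:ℝ) * (G t ^ 2 / t))
      MeasureTheory.volume 1 r := by
    apply ContinuousOn.intervalIntegrable
    rw [huIcc]
    exact continuousOn_const.mul ((hGc.pow 2).div continuousOn_id
      (fun t ht => by simpa using ne_of_gt (lt_of_lt_of_le one_pos ht.1)))
  have h2 : IntervalIntegrable (fun t : ℝ => 2 * Real.pi * c₁ * t⁻¹)
      MeasureTheory.volume 1 r := by
    apply ContinuousOn.intervalIntegrable
    rw [huIcc]
    exact continuousOn_const.mul (continuousOn_id.inv₀ fun t ht => by simpa using ne_of_gt (lt_of_lt_of_le one_pos ht.1))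
  rw [integral_congr (g := fun t => 4 * Real.pi * (j^2:ℝ) * (G t ^ 2 / t)
        + 2 * Real.pi * c₁ * t⁻¹) ?_]
  · rw [integral_add h1 h2, integral_const_mul, integral_const_mul,
      integral_inv (by rw [huIcc]; intro h; exact absurd h.1 (by norm_num))]
    rw [div_one]
  · intro t ht
    rw [huIcc] at ht
    have ht0 : (0:ℝ) < t := lt_of_lt_of_le one_pos ht.1
    have hct := hc t ht
    field_simp
    linear_combination 2 * hct
end

section
/- Suppose r > (R + √(R² − 1))^{1/j} and set r₀ = (R + √(R² − 1))^{1/j}, ρ = r₀/r. Define g⋄ on A(ρ, r₀) by g⋄(z) = g°(z) for 1 ≤ |z| < r₀ and g⋄(z) = z^j/|z|^j for ρ < |z| < 1, where g° is the critical radial harmonic map of A(1, r₀) onto A(1, R). Then the Dirichlet energy of g⋄ equals 4πj² ∫₁^{r₀} G(t)²/t dt − 2πj² log(ρ·r₀), where G is the radial profile of g°. -/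
/- Below the Nitsche bound: with r₀ = (R + √(R² - 1))^{1/j}, ρ = r₀/r, the
Dirichlet energy of g⋄ (which equals z^j/|z|^j on ρ < |z| < 1 and the critical
radial harmonic map g° on 1 ≤ |z| < r₀, whose profile G solves
tG'(t) = j√(G(t)² - 1), G(1) = 1, G(r₀) = R), computed in polar coordinates as
2π ∫ t |Dg⋄|² dt with |Dg⋄|² = j²G²/t² + G'² (G ≡ 1 on [ρ,1]), equals
4πj² ∫₁^{r₀} G(t)²/t dt - 2πj² log(ρ·r₀). -/
theorem stmt19 (j : ℕ) (hj : 0 < j) (R r : ℝ) (hR : 1 < R)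
    (hr : (R + Real.sqrt (R ^ 2 - 1)) ^ ((1 : ℝ) / j) < r)
    (r₀ ρ : ℝ)
    (hr₀ : r₀ = (R + Real.sqrt (R ^ 2 - 1)) ^ ((1 : ℝ) / j))
    (hρ : ρ = r₀ / r)
    (G : ℝ → ℝ) (hG1 : G 1 = 1) (hGr₀ : G r₀ = R)
    (hode : ∀ t ∈ Set.Icc (1 : ℝ) r₀,
      HasDerivAt G ((j : ℝ) * Real.sqrt (G t ^ 2 - 1) / t) t) :
    (∫ t in ρ..(1 : ℝ), 2 * Real.pi * t * ((j ^ 2 : ℝ) / t ^ 2))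
        + (∫ t in (1 : ℝ)..r₀,
            2 * Real.pi * t * ((j ^ 2 : ℝ) * G t ^ 2 / t ^ 2 + (deriv G t) ^ 2))
      = 4 * Real.pi * (j ^ 2 : ℝ) * (∫ t in (1 : ℝ)..r₀, G t ^ 2 / t)
        - 2 * Real.pi * (j ^ 2 : ℝ) * Real.log (ρ * r₀) := by
  have hπ := Real.pi_pos
  have hj' : (0:ℝ) < (1:ℝ)/j := by positivity
  have hbase : 1 < R + Real.sqrt (R ^ 2 - 1) := by
    nlinarith [Real.sqrt_nonneg (R ^ 2 - 1)]
  have hr₀1 : 1 < r₀ := by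
    rw [hr₀]
    exact Real.one_lt_rpow_iff_of_pos (by linarith) |>.mpr (Or.inl ⟨hbase, hj'⟩)
  have hrr : r₀ < r := hr₀ ▸ hr
  have hrpos : 0 < r := by linarith
  have hρpos : 0 < ρ := by rw [hρ]; positivity
  have hρ1 : ρ < 1 := by
    rw [hρ, div_lt_one hrpos]; exact hrr
  -- G is monotone, hence ≥ 1, on [1, r₀]
  have hGc : ContinuousOn G (Set.Icc 1 r₀) := fun t ht =>
    (hode t ht).continuousAt.continuousWithinAt
  have hmono : MonotoneOn G (Set.Icc 1 r₀) := by
    apply monotoneOn_of_deriv_nonneg (convex_Icc 1 r₀) hGc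
    · intro t ht
      rw [interior_Icc] at ht
      exact ((hode t ⟨le_of_lt ht.1, le_of_lt ht.2⟩).differentiableAt).differentiableWithinAt
    · intro t ht
      rw [interior_Icc] at ht
      have ht0 : (0:ℝ) < t := by linarith [ht.1]
      rw [(hode t ⟨le_of_lt ht.1, le_of_lt ht.2⟩).deriv]
      positivity
  have hGge : ∀ t ∈ Set.Icc (1:ℝ) r₀, 1 ≤ G t := by
    intro t ht
    have := hmono ⟨le_refl 1, le_of_lt hr₀1⟩ ht ht.1
    linarith [hG1 ▸ this]
  -- first integral
  have I1 : (∫ t in ρ..(1 : ℝ), 2 * Real.pi * t * ((j ^ 2 : ℝ) / t ^ 2))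
      = -(2 * Real.pi * (j^2:ℝ) * Real.log ρ) := by
    have hcong : ∀ t ∈ Set.uIcc ρ (1:ℝ),
        2 * Real.pi * t * ((j ^ 2 : ℝ) / t ^ 2) = (2 * Real.pi * (j^2:ℝ)) * t⁻¹ := by
      intro t ht
      rw [Set.uIcc_of_le (le_of_lt hρ1)] at ht
      have ht0 : (0:ℝ) < t := lt_of_lt_of_le hρpos ht.1
      field_simp
    rw [intervalIntegral.integral_congr hcong, intervalIntegral.integral_const_mul,
      integral_inv (by
        rw [Set.uIcc_of_le (le_of_lt hρ1)]
        intro h0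
        exact absurd h0.1 (not_le.mpr hρpos))]
    rw [show (1:ℝ)/ρ = ρ⁻¹ by rw [one_div], Real.log_inv]
    ring
  -- rewrite the second integrand
  have hcong2 : ∀ t ∈ Set.uIcc (1:ℝ) r₀,
      2 * Real.pi * t * ((j ^ 2 : ℝ) * G t ^ 2 / t ^ 2 + (deriv G t) ^ 2)
        = (4 * Real.pi * (j^2:ℝ)) * (G t ^ 2 / t) - (2 * Real.pi * (j^2:ℝ)) * t⁻¹ := by
    intro t ht
    rw [Set.uIcc_of_le (le_of_lt hr₀1)] at ht
    have ht0 : (0:ℝ) < t := lt_of_lt_of_le one_pos ht.1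
    have hg1 : (0:ℝ) ≤ G t ^ 2 - 1 := by nlinarith [hGge t ht]
    rw [(hode t ht).deriv, div_pow, mul_pow, Real.sq_sqrt hg1]
    field_simp
    ring
  have hGci : ContinuousOn (fun t => G t ^ 2 / t) (Set.uIcc (1:ℝ) r₀) := by
    rw [Set.uIcc_of_le (le_of_lt hr₀1)]
    exact ((hGc.pow 2).div continuousOn_id fun t ht => by
      have : (0:ℝ) < t := lt_of_lt_of_le one_pos ht.1
      exact ne_of_gt this)
  have hint1 : IntervalIntegrable (fun t => (4 * Real.pi * (j^2:ℝ)) * (G t ^ 2 / t))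
      MeasureTheory.volume 1 r₀ :=
    (hGci.const_smul (4 * Real.pi * (j^2:ℝ))).intervalIntegrable
  have hint2 : IntervalIntegrable (fun t => (2 * Real.pi * (j^2:ℝ)) * t⁻¹)
      MeasureTheory.volume 1 r₀ := by
    apply ContinuousOn.intervalIntegrable
    apply ContinuousOn.const_smul _ (2 * Real.pi * (j^2:ℝ))
    apply ContinuousOn.inv₀ continuousOn_id
    rw [Set.uIcc_of_le (le_of_lt hr₀1)]
    intro t ht
    have : (0:ℝ) < t := lt_of_lt_of_le one_pos ht.1
    exact ne_of_gt this
  have I2 : (∫ t in (1 : ℝ)..r₀,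
      2 * Real.pi * t * ((j ^ 2 : ℝ) * G t ^ 2 / t ^ 2 + (deriv G t) ^ 2))
      = 4 * Real.pi * (j^2:ℝ) * (∫ t in (1 : ℝ)..r₀, G t ^ 2 / t)
        - 2 * Real.pi * (j^2:ℝ) * Real.log r₀ := by
    rw [intervalIntegral.integral_congr hcong2,
      intervalIntegral.integral_sub hint1 hint2,
      intervalIntegral.integral_const_mul, intervalIntegral.integral_const_mul,
      integral_inv (by
        rw [Set.uIcc_of_le (le_of_lt hr₀1)]
        intro h0
        exact absurd h0.1 (not_le.mpr one_pos))]
    rw [div_one]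
  rw [I1, I2, Real.log_mul (ne_of_gt hρpos) (by linarith)]
  ring
end
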